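/- Let M : [0,∞) → [0,∞) be defined by M(0) = 0, M(t) = (e²/4)·e^{−1/t} for 0 < t < 1/2, and M(t) = t² for t ≥ 1/2. Then M is strictly convex on [0,∞): for all s, t ≥ 0 with s ≠ t and all θ ∈ (0,1), M(θs + (1−θ)t) < θ·M(s) + (1−θ)·M(t). In particular, M is convex, continuous, non-decreasing, M(0) = 0, and M(t) → ∞ as t → ∞. -/

import Mathlib

noncomputable def Mfun (t : ℝ) : ℝ :=
  if t ≤ 0 then 0 else if t < 1 / 2 then (Real.exp 2 / 4) * Real.exp (-1 / t) else t ^ 2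

open Real Set Filter

noncomputable def Gfun (t : ℝ) : ℝ := (Real.exp 2 / 4) * Real.exp (-1 / t)

noncomputable def Dfun (t : ℝ) : ℝ :=
  if t ≤ 1 / 2 then (Real.exp 2 / 4) * (Real.exp (-1 / t) * (t ^ 2)⁻¹) else 2 * t

lemma Mfun_eq_G {t : ℝ} (h0 : 0 < t) (h : t ≤ 1/2) : Mfun t = Gfun t := by
  rcases lt_or_eq_of_le h with h' | h'
  · unfold Mfun Gfun
    rw [if_neg (not_le.2 h0), if_pos h']
  · subst h'
    unfold Mfun Gfun
    rw [if_neg (by norm_num : ¬ ((1:ℝ)/2) ≤ 0), if_neg (lt_irrefl _)]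
    rw [show (-1 : ℝ)/(1/2) = -2 by norm_num, div_mul_eq_mul_div, ← Real.exp_add]
    norm_num

lemma Mfun_eq_sq {t : ℝ} (h : 1/2 ≤ t) : Mfun t = t ^ 2 := by
  unfold Mfun
  rw [if_neg (by linarith : ¬ t ≤ 0), if_neg (not_lt.2 h)]

lemma hasDerivAt_G {t : ℝ} (ht : t ≠ 0) :
    HasDerivAt Gfun ((Real.exp 2 / 4) * (Real.exp (-1 / t) * (t ^ 2)⁻¹)) t := by
  have h1 : HasDerivAt (fun x : ℝ => -1 / x) ((t ^ 2)⁻¹) t := by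
    have := (hasDerivAt_inv ht).neg
    simpa [neg_div, one_div, neg_neg, Pi.neg_def] using this
  have h2 := h1.exp
  exact h2.const_mul (Real.exp 2 / 4)

lemma Dfun_half : Dfun (1/2 : ℝ) = 1 := by
  have h : Real.exp 2 * Real.exp (-2) = 1 := by rw [← Real.exp_add]; norm_num
  simp only [Dfun, le_refl, if_pos]
  rw [show (-1 : ℝ)/(1/2) = -2 by norm_num, show ((1:ℝ)/2) ^ 2 = 4⁻¹ by norm_num, inv_inv]
  nlinarith [h]

lemma hasDerivAt_Mfun {t : ℝ} (ht : 0 < t) : HasDerivAt Mfun (Dfun t) t := by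
  rcases lt_trichotomy t (1/2) with h | h | h
  · have he : Mfun =ᶠ[nhds t] Gfun := by
      filter_upwards [Ioo_mem_nhds ht h] with x hx
      exact Mfun_eq_G hx.1 hx.2.le
    have hd : Dfun t = (Real.exp 2 / 4) * (Real.exp (-1 / t) * (t ^ 2)⁻¹) := by
      unfold Dfun; rw [if_pos h.le]
    rw [hd]
    exact (hasDerivAt_G ht.ne').congr_of_eventuallyEq he
  · subst h
    rw [Dfun_half]
    have hG : HasDerivAt Gfun 1 (1/2 : ℝ) := by
      have := hasDerivAt_G (t := (1/2:ℝ)) (by norm_num)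
      have e : (Real.exp 2 / 4) * (Real.exp (-1 / (1/2:ℝ)) * (((1:ℝ)/2) ^ 2)⁻¹) = 1 := by
        have := Dfun_half
        simpa [Dfun] using this
      rwa [e] at this
    have hleft : HasDerivWithinAt Mfun 1 (Iic (1/2 : ℝ)) (1/2) := by
      have h1 : HasDerivWithinAt Gfun 1 (Ioc 0 (1/2 : ℝ)) (1/2) := hG.hasDerivWithinAt
      have h2 : HasDerivWithinAt Mfun 1 (Ioc 0 (1/2 : ℝ)) (1/2) :=
        h1.congr (fun x hx => Mfun_eq_G hx.1 hx.2) (Mfun_eq_G (by norm_num) le_rfl)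
      apply h2.mono_of_mem_nhdsWithin
      rw [show Ioc (0:ℝ) (1/2) = Iic (1/2) ∩ Ioi 0 by ext x; simp [and_comm]]
      exact inter_mem_nhdsWithin _ (Ioi_mem_nhds (by norm_num))
    have hright : HasDerivWithinAt Mfun 1 (Ici (1/2 : ℝ)) (1/2) := by
      have h1 : HasDerivWithinAt (fun x : ℝ => x ^ 2) 1 (Ici (1/2 : ℝ)) (1/2) := by
        have := hasDerivAt_pow 2 ((1:ℝ)/2)
        norm_num at this
        exact this.hasDerivWithinAt
      exact h1.congr (fun x hx => Mfun_eq_sq hx) (Mfun_eq_sq le_rfl)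
    have := hleft.union hright
    rwa [Iic_union_Ici, hasDerivWithinAt_univ] at this
  · have he : Mfun =ᶠ[nhds t] (fun x => x ^ 2) := by
      filter_upwards [Ioi_mem_nhds h] with x hx
      exact Mfun_eq_sq (le_of_lt hx)
    have hd : Dfun t = 2 * t := by unfold Dfun; rw [if_neg (not_le.2 h)]
    rw [hd]
    have h2 := hasDerivAt_pow 2 t
    norm_num at h2
    exact h2.congr_of_eventuallyEq he

lemma logD_strictMono : StrictMonoOn (fun t : ℝ => -1/t - 2 * Real.log t) (Ioc 0 (1/2 : ℝ)) := by
  apply strictMonoOn_of_deriv_pos (convex_Ioc _ _)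
  · intro x hx
    have hx0 : x ≠ 0 := ne_of_gt hx.1
    exact ((continuousAt_const.div continuousAt_id hx0).sub
      (continuousAt_const.mul (Real.continuousAt_log hx0))).continuousWithinAt
  · intro x hx
    rw [interior_Ioc] at hx
    have hx0 : x ≠ 0 := ne_of_gt hx.1
    have hd : HasDerivAt (fun t : ℝ => -1/t - 2 * Real.log t) ((x^2)⁻¹ - 2 * x⁻¹) x := by
      have h1 : HasDerivAt (fun t : ℝ => -1 / t) ((x ^ 2)⁻¹) x := by
        have := (hasDerivAt_inv hx0).neg
        simpa [neg_div, one_div, neg_neg, Pi.neg_def] using this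
      exact h1.sub ((Real.hasDerivAt_log hx0).const_mul 2)
    rw [hd.deriv, sub_pos, sq, mul_inv]
    have h2 : (2:ℝ) < x⁻¹ := by
      rw [show (2:ℝ) = (1/2 : ℝ)⁻¹ by norm_num]
      exact inv_strictAnti₀ hx.1 hx.2
    exact mul_lt_mul_of_pos_right h2 (inv_pos.2 hx.1)

lemma Dfun_eq_exp {t : ℝ} (h0 : 0 < t) (h : t ≤ 1/2) :
    Dfun t = (Real.exp 2 / 4) * Real.exp (-1/t - 2 * Real.log t) := by
  unfold Dfun
  rw [if_pos h, Real.exp_sub, two_mul, Real.exp_add, Real.exp_log h0, sq]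
  ring

lemma Dfun_strictMono : StrictMonoOn Dfun (Ioi (0:ℝ)) := by
  have key : ∀ a ∈ Ioc (0:ℝ) (1/2), ∀ b ∈ Ioc (0:ℝ) (1/2), a < b → Dfun a < Dfun b := by
    intro a ha b hb hab
    rw [Dfun_eq_exp ha.1 ha.2, Dfun_eq_exp hb.1 hb.2]
    have := logD_strictMono ha hb hab
    exact mul_lt_mul_of_pos_left (Real.exp_lt_exp.2 this) (by positivity)
  intro a ha b hb hab
  simp only [mem_Ioi] at ha hb
  rcases le_or_gt b (1/2) with hb2 | hb2
  · exact key a ⟨ha, hab.le.trans hb2⟩ b ⟨hb, hb2⟩ hab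
  · have hDb : Dfun b = 2 * b := by unfold Dfun; rw [if_neg (not_le.2 hb2)]
    rcases le_or_gt a (1/2) with ha2 | ha2
    · have : Dfun a ≤ 1 := by
        rcases lt_or_eq_of_le ha2 with h | h
        · have := key a ⟨ha, ha2⟩ (1/2) ⟨by norm_num, le_rfl⟩ h
          rw [Dfun_half] at this; exact this.le
        · rw [h, Dfun_half]
      calc Dfun a ≤ 1 := this
        _ < 2 * b := by linarith
        _ = Dfun b := hDb.symm
    · have hDa : Dfun a = 2 * a := by unfold Dfun; rw [if_neg (not_le.2 ha2)]
      rw [hDa, hDb]; linarith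

lemma Mfun_continuousOn : ContinuousOn Mfun (Ici (0:ℝ)) := by
  intro x hx
  rcases eq_or_lt_of_le (mem_Ici.1 hx) with h | h
  · subst h
    have h0 : Mfun 0 = 0 := by simp [Mfun]
    rw [ContinuousWithinAt, h0]
    rw [show Ici (0:ℝ) = {0} ∪ Ioi 0 by ext y; simp [le_iff_lt_or_eq, or_comm, eq_comm],
      nhdsWithin_union, tendsto_sup]
    constructor
    · apply tendsto_nhds_of_eventually_eq
      filter_upwards [self_mem_nhdsWithin] with y hy
      simp at hy; simp [hy, Mfun]
    · have hG : Tendsto Gfun (nhdsWithin 0 (Ioi 0)) (nhds 0) := by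
        have h1 : Tendsto (fun t : ℝ => -1/t) (nhdsWithin 0 (Ioi 0)) atBot := by
          have h2 := tendsto_neg_atTop_atBot.comp
            (tendsto_inv_nhdsGT_zero (𝕜 := ℝ))
          simpa [Function.comp_def, neg_div, one_div] using h2
        have h2 := Real.tendsto_exp_atBot.comp h1
        have := h2.const_mul (Real.exp 2 / 4)
        simpa [show Gfun = fun t => (Real.exp 2 / 4) * Real.exp (-1 / t) from rfl] using this
      apply hG.congr'
      filter_upwards [Ioo_mem_nhdsGT_of_mem (by norm_num : (0:ℝ) ∈ Ico 0 (1/2))] with y hy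
      exact (Mfun_eq_G hy.1 hy.2.le).symm
  · exact (hasDerivAt_Mfun h).continuousAt.continuousWithinAt

theorem Mfun_strictly_convex :
    (∀ s t : ℝ, 0 ≤ s → 0 ≤ t → s ≠ t → ∀ θ : ℝ, 0 < θ → θ < 1 →
      Mfun (θ * s + (1 - θ) * t) < θ * Mfun s + (1 - θ) * Mfun t) ∧
    ConvexOn ℝ (Set.Ici 0) Mfun ∧
    ContinuousOn Mfun (Set.Ici 0) ∧
    MonotoneOn Mfun (Set.Ici 0) ∧
    Mfun 0 = 0 ∧
    Filter.Tendsto Mfun Filter.atTop Filter.atTop := by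
  have hderiv : ∀ x ∈ interior (Ici (0:ℝ)), deriv Mfun x = Dfun x := by
    intro x hx
    rw [interior_Ici] at hx
    exact (hasDerivAt_Mfun hx).deriv
  have hsc : StrictConvexOn ℝ (Ici (0:ℝ)) Mfun := by
    apply StrictMonoOn.strictConvexOn_of_deriv (convex_Ici 0) Mfun_continuousOn
    intro a ha b hb hab
    rw [hderiv a ha, hderiv b hb]
    rw [interior_Ici] at ha hb
    exact Dfun_strictMono ha hb hab
  have hmono : MonotoneOn Mfun (Ici (0:ℝ)) := by
    apply StrictMonoOn.monotoneOn
    apply strictMonoOn_of_deriv_pos (convex_Ici 0) Mfun_continuousOn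
    intro x hx
    rw [hderiv x hx]
    rw [interior_Ici] at hx
    simp only [Dfun]
    simp only [mem_Ioi] at hx
    split
    · have h1 : (0:ℝ) < (x ^ 2)⁻¹ := inv_pos.2 (pow_pos hx 2)
      have h2 := Real.exp_pos (-1/x)
      have h3 : (0:ℝ) < Real.exp 2 / 4 := by positivity
      exact mul_pos h3 (mul_pos h2 h1)
    · linarith
  refine ⟨?_, hsc.convexOn, Mfun_continuousOn, hmono, by simp [Mfun], ?_⟩
  · intro s t hs ht hst θ hθ hθ1
    have := hsc.2 (mem_Ici.2 hs) (mem_Ici.2 ht) hst hθ (by linarith : (0:ℝ) < 1 - θ)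
      (by ring)
    simpa using this
  · apply Tendsto.congr' (f₁ := fun t : ℝ => t ^ 2)
    · filter_upwards [eventually_ge_atTop (1/2 : ℝ)] with t ht
      exact (Mfun_eq_sq ht).symm
    · exact tendsto_pow_atTop (by norm_num)
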